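/- Let P be a finite poset with a linear extension L and suppose S ⊆ Inc(P) is such that for every (x,y) ∈ S there is a 'level' function a assigning to each (x,y) ∈ S an element a(y) of a fixed linear order M with the property: whenever (x,y), (x',y') ∈ S and x ≤ y' in P, then a(y') ≤ x < a(y) in M. Then S is reversible. -/

import Mathlib

variable {α : Type*}

/-- `L` is a linear extension of the partial order on `α`. -/
def IsLinExt [PartialOrder α] (L : LinearOrder α) : Prop :=
  ∀ x y : α, x ≤ y → L.le x y

/-- The set of ordered incomparable pairs of the poset `α`. -/
def Inc (α : Type*) [PartialOrder α] : Set (α × α) :=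
  {p | ¬ p.1 ≤ p.2 ∧ ¬ p.2 ≤ p.1}

/-- `L` reverses every pair of `S`. -/
def Reverses [PartialOrder α] (L : LinearOrder α) (S : Set (α × α)) : Prop :=
  ∀ p ∈ S, L.lt p.2 p.1

/-- `S` is reversible: some linear extension reverses all its pairs. -/
def Reversible [PartialOrder α] (S : Set (α × α)) : Prop :=
  ∃ L : LinearOrder α, IsLinExt L ∧ Reverses L S

/-- An alternating cycle of length `k ≥ 2` contained in `S`, indexed cyclically. -/
def IsAltCycle [PartialOrder α] (S : Set (α × α)) (k : ℕ) (x y : ZMod k → α) : Prop :=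
  2 ≤ k ∧ (∀ i, (x i, y i) ∈ S) ∧ ∀ i, x i ≤ y (i + 1)

/-- A strict alternating cycle: `x i ≤ y j` iff `j = i + 1`, and the `x`'s and `y`'s
form `k`-element antichains. -/
def IsStrictAltCycle [PartialOrder α] (S : Set (α × α)) (k : ℕ) (x y : ZMod k → α) : Prop :=
  IsAltCycle S k x y ∧ (∀ i j, x i ≤ y j ↔ j = i + 1) ∧
  Function.Injective x ∧ Function.Injective y ∧
  (∀ i j : ZMod k, i ≠ j → ¬ x i ≤ x j) ∧ (∀ i j : ZMod k, i ≠ j → ¬ y i ≤ y j)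

/-- `α` has a realizer consisting of `d` linear extensions. -/
def HasRealizer (α : Type*) [PartialOrder α] (d : ℕ) : Prop :=
  ∃ f : Fin d → LinearOrder α, (∀ i, IsLinExt (f i)) ∧
    ∀ x y : α, x ≤ y ↔ ∀ i, (f i).le x y

/-- The (Dushnik–Miller) dimension of the poset `α`. -/
noncomputable def pdim (α : Type*) [PartialOrder α] : ℕ :=
  sInf {d | 0 < d ∧ HasRealizer α d}

/-- If elements can be mapped into a linear order `β` (via `ι`) with a level function `a`
such that every `(x,y) ∈ S` has `ι x < a y`, and any comparability `x ≤ y'` between pairs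
of `S` forces `a y' ≤ ι x`, then `S` is reversible. -/
theorem stmt_7 [PartialOrder α] [Fintype α] {β : Type*} [LinearOrder β]
    (S : Set (α × α)) (hS : S ⊆ Inc α) (ι : α → β) (a : α → β)
    (h1 : ∀ p ∈ S, ι p.1 < a p.2)
    (h2 : ∀ p ∈ S, ∀ q ∈ S, p.1 ≤ q.2 → a q.2 ≤ ι p.1) :
    Reversible S := by
  classical
  set r : α → α → Prop := fun u v => u ≤ v ∨ (v, u) ∈ S with hr
  -- key structural lemma about reflexive-transitive closure of r
  have key : ∀ u v, Relation.ReflTransGen r u v →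
      u ≤ v ∨ ∃ p ∈ S, ∃ q ∈ S, u ≤ p.2 ∧ q.1 ≤ v ∧ a q.2 ≤ a p.2 := by
    intro u v h
    induction h with
    | refl => exact Or.inl le_rfl
    | @tail b c _ hbc ih =>
      rcases hbc with hle | hmem
      · rcases ih with h | ⟨p, hp, q, hq, h1', h2', h3'⟩
        · exact Or.inl (h.trans hle)
        · exact Or.inr ⟨p, hp, q, hq, h1', h2'.trans hle, h3'⟩
      · -- step from b to c with (c, b) ∈ S
        rcases ih with h | ⟨p, hp, q, hq, h1', h2', h3'⟩
        · exact Or.inr ⟨(c, b), hmem, (c, b), hmem, h, le_rfl, le_rfl⟩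
        · refine Or.inr ⟨p, hp, (c, b), hmem, h1', le_rfl, ?_⟩
          have hA : a b ≤ ι q.1 := h2 q hq (c, b) hmem h2'
          have hB : ι q.1 < a q.2 := h1 q hq
          exact le_trans (le_of_lt (lt_of_le_of_lt hA hB)) h3'
  have contra : ∀ (p : α × α), p ∈ S → ∀ (q : α × α), q ∈ S →
      q.1 ≤ p.2 → a q.2 ≤ a p.2 → False := by
    intro p hp q hq hle hale
    have hA : a p.2 ≤ ι q.1 := h2 q hq p hp hle
    have hB : ι q.1 < a q.2 := h1 q hq
    exact absurd (lt_of_lt_of_le (lt_of_le_of_lt hA hB) hale) (lt_irrefl _)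
  have antisymm : ∀ u v, Relation.ReflTransGen r u v →
      Relation.ReflTransGen r v u → u = v := by
    intro u v huv hvu
    rcases key u v huv with h1' | ⟨p, hp, q, hq, ha1, ha2, ha3⟩
    · rcases key v u hvu with h2' | ⟨p', hp', q', hq', hb1, hb2, hb3⟩
      · exact le_antisymm h1' h2'
      · exact (contra p' hp' q' hq' (hb2.trans (h1'.trans hb1)) hb3).elim
    · rcases key v u hvu with h2' | ⟨p', hp', q', hq', hb1, hb2, hb3⟩
      · exact (contra p hp q hq (ha2.trans (h2'.trans ha1)) ha3).elim
      · -- q.1 ≤ v ≤ p'.2  and  q'.1 ≤ u ≤ p.2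
        have c1 : a p'.2 ≤ ι q.1 := h2 q hq p' hp' (ha2.trans hb1)
        have c2 : a p.2 ≤ ι q'.1 := h2 q' hq' p hp (hb2.trans ha1)
        have : a p'.2 < a p'.2 :=
          lt_of_le_of_lt (le_trans c1 (le_of_lt (lt_of_lt_of_le (h1 q hq) ha3)))
            (lt_of_le_of_lt c2 (lt_of_lt_of_le (h1 q' hq') hb3))
        exact absurd this (lt_irrefl _)
  haveI hpo : IsPartialOrder α (Relation.ReflTransGen r) :=
    { refl := fun _ => Relation.ReflTransGen.refl
      trans := fun _ _ _ h h' => h.trans h'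
      antisymm := antisymm }
  obtain ⟨s, hslin, hrs⟩ := extend_partialOrder (Relation.ReflTransGen r)
  haveI := hslin
  letI L : LinearOrder α :=
    { le := s
      lt := fun x y => s x y ∧ ¬ s y x
      le_refl := hslin.refl
      le_trans := fun x y z => hslin.trans x y z
      le_antisymm := fun x y => hslin.antisymm x y
      le_total := hslin.total
      lt_iff_le_not_ge := fun _ _ => Iff.rfl
      toDecidableLE := Classical.decRel _ }
  refine ⟨L, ?_, ?_⟩
  · intro x y hxy
    exact hrs _ _ (Relation.ReflTransGen.single (Or.inl hxy))
  · rintro ⟨x, y⟩ hxy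
    have hyx : s y x := hrs _ _ (Relation.ReflTransGen.single (Or.inr hxy))
    have hne : x ≠ y := fun h => (hS hxy).1 (le_of_eq h)
    exact ⟨hyx, fun hxy' => hne (hslin.antisymm _ _ hxy' hyx)⟩
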